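/- Define F_L : ℝ → Matrix (Fin 2) (Fin 2) ℝ by F_L(α) := (cosh(2α))^(−1/2) • ![![1, sinh(2α)], ![0, cosh(2α)]]. Then F_L is differentiable (entrywise) and for every α ∈ ℝ, the velocity gradient ℓ(α) := F_L'(α)·F_L(α)⁻¹ satisfies ℓ(α) = ![![−tanh(2α), 2], ![0, tanh(2α)]]. Consequently its symmetric part d(α) := (1/2)(ℓ(α) + ℓ(α)ᵀ) equals ![![−tanh(2α), 1], ![1, tanh(2α)]] and its skew-symmetric part w(α) := (1/2)(ℓ(α) − ℓ(α)ᵀ) equals ![![0, 1], ![−1, 0]]. -/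

import Mathlib

open Matrix Real

/-- Entrywise derivative of a matrix-valued function of a real variable. -/
noncomputable def matDeriv (A : ℝ → Matrix (Fin 2) (Fin 2) ℝ) (t : ℝ) :
    Matrix (Fin 2) (Fin 2) ℝ :=
  Matrix.of fun i j => deriv (fun s => A s i j) t

lemma aux_h2 (α : ℝ) : HasDerivAt (fun t : ℝ => 2*t) 2 α := by
  simpa using (hasDerivAt_id α).const_mul (2:ℝ)

lemma aux_hcosh (α : ℝ) :
    HasDerivAt (fun t => Real.cosh (2*t)) (Real.sinh (2*α) * 2) α :=
  (Real.hasDerivAt_cosh (2*α)).comp α (aux_h2 α)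

lemma aux_hsinh (α : ℝ) :
    HasDerivAt (fun t => Real.sinh (2*t)) (Real.cosh (2*α) * 2) α :=
  (Real.hasDerivAt_sinh (2*α)).comp α (aux_h2 α)

lemma aux_hsqrt (α : ℝ) :
    HasDerivAt (fun t => Real.sqrt (Real.cosh (2*t)))
      (1 / (2 * Real.sqrt (Real.cosh (2*α))) * (Real.sinh (2*α) * 2)) α :=
  (Real.hasDerivAt_sqrt (Real.cosh_pos (x := 2*α)).ne').comp α (aux_hcosh α)

lemma aux_hinv (α : ℝ) :
    HasDerivAt (fun t => (Real.sqrt (Real.cosh (2*t)))⁻¹)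
      (-(1 / (2 * Real.sqrt (Real.cosh (2*α))) * (Real.sinh (2*α) * 2)) /
        (Real.sqrt (Real.cosh (2*α)))^2) α :=
  (aux_hsqrt α).inv (Real.sqrt_pos.mpr (Real.cosh_pos (x := 2*α))).ne'

lemma aux_h01 (α : ℝ) :
    HasDerivAt (fun t => (Real.sqrt (Real.cosh (2*t)))⁻¹ * Real.sinh (2*t))
      (-(1 / (2 * Real.sqrt (Real.cosh (2*α))) * (Real.sinh (2*α) * 2)) /
        (Real.sqrt (Real.cosh (2*α)))^2 * Real.sinh (2*α)
        + (Real.sqrt (Real.cosh (2*α)))⁻¹ * (Real.cosh (2*α) * 2)) α :=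
  (aux_hinv α).mul (aux_hsinh α)

lemma aux_h11 (α : ℝ) :
    HasDerivAt (fun t => (Real.sqrt (Real.cosh (2*t)))⁻¹ * Real.cosh (2*t))
      (-(1 / (2 * Real.sqrt (Real.cosh (2*α))) * (Real.sinh (2*α) * 2)) /
        (Real.sqrt (Real.cosh (2*α)))^2 * Real.cosh (2*α)
        + (Real.sqrt (Real.cosh (2*α)))⁻¹ * (Real.sinh (2*α) * 2)) α :=
  (aux_hinv α).mul (aux_hcosh α)

/-- Eqs. (4-38) and (4-40): the velocity gradient of LFSS deformation is
`ℓ = !![−tanh 2α, 2; 0, tanh 2α]`, with stretching `d = !![−tanh 2α, 1; 1, tanh 2α]`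
and vorticity `w = !![0, 1; −1, 0]`. -/
theorem lfss_velocity_gradient :
    let F_L : ℝ → Matrix (Fin 2) (Fin 2) ℝ := fun α =>
      (Real.sqrt (Real.cosh (2*α)))⁻¹ • !![1, Real.sinh (2*α); 0, Real.cosh (2*α)]
    (∀ α : ℝ, ∀ i j, DifferentiableAt ℝ (fun s => F_L s i j) α) ∧
    (∀ α : ℝ,
      let ℓ : Matrix (Fin 2) (Fin 2) ℝ := matDeriv F_L α * (F_L α)⁻¹
      ℓ = !![-Real.tanh (2*α), 2; 0, Real.tanh (2*α)] ∧
      (1/2 : ℝ) • (ℓ + ℓᵀ) = !![-Real.tanh (2*α), 1; 1, Real.tanh (2*α)] ∧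
      (1/2 : ℝ) • (ℓ - ℓᵀ) = !![0, 1; -1, 0]) := by
  intro F_L
  have hF00 : ∀ s : ℝ, F_L s 0 0 = (Real.sqrt (Real.cosh (2*s)))⁻¹ := by
    intro s; simp [F_L]
  have hF01 : ∀ s : ℝ, F_L s 0 1
      = (Real.sqrt (Real.cosh (2*s)))⁻¹ * Real.sinh (2*s) := by
    intro s; simp [F_L]
  have hF10 : ∀ s : ℝ, F_L s 1 0 = 0 := by intro s; simp [F_L]
  have hF11 : ∀ s : ℝ, F_L s 1 1
      = (Real.sqrt (Real.cosh (2*s)))⁻¹ * Real.cosh (2*s) := by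
    intro s; simp [F_L]
  constructor
  · intro α i j
    fin_cases i <;> fin_cases j
    · exact (aux_hinv α).differentiableAt.congr_of_eventuallyEq
        (Filter.Eventually.of_forall fun s => hF00 s)
    · exact (aux_h01 α).differentiableAt.congr_of_eventuallyEq
        (Filter.Eventually.of_forall fun s => hF01 s)
    · exact (differentiableAt_const 0).congr_of_eventuallyEq
        (Filter.Eventually.of_forall fun s => hF10 s)
    · exact (aux_h11 α).differentiableAt.congr_of_eventuallyEq
        (Filter.Eventually.of_forall fun s => hF11 s)
  · intro α ℓ
    have hc : (0:ℝ) < Real.cosh (2*α) := Real.cosh_pos _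
    have hq : (0:ℝ) < Real.sqrt (Real.cosh (2*α)) := Real.sqrt_pos.mpr hc
    have hq2 : Real.sqrt (Real.cosh (2*α)) * Real.sqrt (Real.cosh (2*α))
        = Real.cosh (2*α) := Real.mul_self_sqrt hc.le
    set c := Real.cosh (2*α) with hcdef
    set s := Real.sinh (2*α) with hsdef
    set q := Real.sqrt c with hqdef
    have hD : matDeriv F_L α =
        !![-(1/(2*q) * (s*2)) / q^2,
           -(1/(2*q) * (s*2)) / q^2 * s + q⁻¹ * (c*2);
           0,
           -(1/(2*q) * (s*2)) / q^2 * c + q⁻¹ * (s*2)] := by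
      ext i j
      fin_cases i <;> fin_cases j
      · show deriv (fun t => F_L t 0 0) α = -(1/(2*q) * (s*2)) / q^2
        rw [funext hF00]; exact (aux_hinv α).deriv
      · show deriv (fun t => F_L t 0 1) α = -(1/(2*q) * (s*2)) / q^2 * s + q⁻¹ * (c*2)
        rw [funext hF01]; exact (aux_h01 α).deriv
      · show deriv (fun t => F_L t 1 0) α = 0
        rw [funext hF10]; exact deriv_const α 0
      · show deriv (fun t => F_L t 1 1) α = -(1/(2*q) * (s*2)) / q^2 * c + q⁻¹ * (s*2)
        rw [funext hF11]; exact (aux_h11 α).deriv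
    have hInv : (F_L α)⁻¹ = !![q, -(s*q/c); 0, q/c] := by
      apply Matrix.inv_eq_right_inv
      have e : F_L α = q⁻¹ • !![1, s; 0, c] := rfl
      rw [e, ← hq2]
      ext i j
      fin_cases i <;> fin_cases j <;>
        simp [Matrix.mul_apply, Fin.sum_univ_two, Matrix.one_apply, Matrix.smul_apply] <;>
        field_simp <;> ring
    have ht : Real.tanh (2*α) = s / c := Real.tanh_eq_sinh_div_cosh (2*α)
    have hℓ : ℓ = !![-Real.tanh (2*α), 2; 0, Real.tanh (2*α)] := by
      show matDeriv F_L α * (F_L α)⁻¹ = _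
      rw [hD, hInv, ht, ← hq2]
      ext i j
      fin_cases i <;> fin_cases j <;>
        simp [Matrix.mul_apply, Fin.sum_univ_two] <;>
        field_simp <;> ring
    have hT : (!![-Real.tanh (2*α), 2; 0, Real.tanh (2*α)])ᵀ
        = !![-Real.tanh (2*α), 0; 2, Real.tanh (2*α)] := by
      ext i j; fin_cases i <;> fin_cases j <;> simp [Matrix.transpose_apply]
    refine ⟨hℓ, ?_, ?_⟩ <;> rw [hℓ, hT] <;> ext i j <;> fin_cases i <;> fin_cases j <;>
      simp [Matrix.add_apply, Matrix.sub_apply, Matrix.smul_apply] <;> ring
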